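/- For all real μ₂ > 0 and μ₃ > 0, ∫₀^∞ [ ∫₀^∞ (μ₃·max(0, min(s, 1/μ₃) − max(s−t, 0)))² ds ] · μ₂·e^{-μ₂·t} dt = (2·μ₃/μ₂²)·(1 − (μ₃/μ₂)·(1 − e^{-μ₂/μ₃})). -/

import Mathlib

open Real MeasureTheory Set Filter Topology

private lemma cont_f (mu3 t : ℝ) :
    Continuous (fun s : ℝ => (mu3 * max 0 (min s (1 / mu3) - max (s - t) 0)) ^ 2) := by
  fun_prop

private lemma sq_integral (mu3 b c : ℝ) :
    ∫ s in b..c, mu3 ^ 2 * s ^ 2 = mu3 ^ 2 * (c ^ 3 - b ^ 3) / 3 := by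
  rw [intervalIntegral.integral_const_mul, integral_pow]
  norm_num; ring

private lemma inner_split (mu3 t : ℝ) (hmu3 : 0 < mu3) (ht : 0 ≤ t) :
    ∫ s in Set.Ioi (0 : ℝ), (mu3 * max 0 (min s (1 / mu3) - max (s - t) 0)) ^ 2
      = ∫ s in (0:ℝ)..(t + 1 / mu3), (mu3 * max 0 (min s (1 / mu3) - max (s - t) 0)) ^ 2 := by
  set a := 1 / mu3 with ha
  have ha0 : 0 < a := by positivity
  have hta : 0 ≤ t + a := by linarith
  have hU : Ioc (0:ℝ) (t + a) ∪ Ioi (t + a) = Ioi 0 := Set.Ioc_union_Ioi_eq_Ioi hta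
  have hzero : ∀ s ∈ Ioi (t + a), (mu3 * max 0 (min s a - max (s - t) 0)) ^ 2 = 0 := by
    intro s hs
    simp only [Set.mem_Ioi] at hs
    have h1 : min s a = a := min_eq_right (by linarith)
    have h2 : max (s - t) 0 = s - t := max_eq_left (by linarith)
    have h3 : max 0 (a - (s - t)) = 0 := max_eq_left (by linarith)
    rw [h1, h2, h3]; ring
  rw [intervalIntegral.integral_of_le hta, ← hU, setIntegral_union (Set.Ioc_disjoint_Ioi le_rfl)
    measurableSet_Ioi ((cont_f mu3 t).integrableOn_Ioc)]
  · rw [setIntegral_congr_fun measurableSet_Ioi hzero]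
    simp [ha]
  · exact IntegrableOn.congr_fun integrableOn_zero
      (fun s hs => (hzero s hs).symm) measurableSet_Ioi

private lemma inner_ge (mu3 t : ℝ) (hmu3 : 0 < mu3) (ht : 1 / mu3 ≤ t) :
    ∫ s in Set.Ioi (0 : ℝ), (mu3 * max 0 (min s (1 / mu3) - max (s - t) 0)) ^ 2
      = t - 1 / (3 * mu3) := by
  set a := 1 / mu3 with ha
  have ha0 : 0 < a := by positivity
  have key := inner_split mu3 t hmu3 (le_trans ha0.le ht)
  rw [key]
  have i1 := (cont_f mu3 t).intervalIntegrable (μ := volume) (0:ℝ) a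
  have i2 := (cont_f mu3 t).intervalIntegrable (μ := volume) a t
  have i3 := (cont_f mu3 t).intervalIntegrable (μ := volume) t (t + a)
  rw [← intervalIntegral.integral_add_adjacent_intervals (i1.trans i2) i3,
      ← intervalIntegral.integral_add_adjacent_intervals i1 i2]
  have e1 : ∫ s in (0:ℝ)..a, (mu3 * max 0 (min s a - max (s - t) 0)) ^ 2
      = ∫ s in (0:ℝ)..a, mu3 ^ 2 * s ^ 2 := by
    apply intervalIntegral.integral_congr
    intro s hs
    rw [Set.uIcc_of_le ha0.le] at hs
    obtain ⟨h1, h2⟩ := hs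
    show (mu3 * max 0 (min s a - max (s - t) 0)) ^ 2 = mu3 ^ 2 * s ^ 2
    have hm : min s a = s := min_eq_left h2
    have hx : max (s - t) 0 = 0 := max_eq_right (by linarith)
    rw [hm, hx, sub_zero, max_eq_right h1]
    ring
  have e2 : ∫ s in a..t, (mu3 * max 0 (min s a - max (s - t) 0)) ^ 2
      = ∫ s in a..t, (1:ℝ) := by
    apply intervalIntegral.integral_congr
    intro s hs
    rw [Set.uIcc_of_le ht] at hs
    obtain ⟨h1, h2⟩ := hs
    show (mu3 * max 0 (min s a - max (s - t) 0)) ^ 2 = 1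
    have hm : min s a = a := min_eq_right h1
    have hx : max (s - t) 0 = 0 := max_eq_right (by linarith)
    rw [hm, hx, sub_zero, max_eq_right ha0.le, ha]
    field_simp
  have e3 : ∫ s in t..(t + a), (mu3 * max 0 (min s a - max (s - t) 0)) ^ 2
      = ∫ s in t..(t + a), mu3 ^ 2 * (a + t - s) ^ 2 := by
    apply intervalIntegral.integral_congr
    intro s hs
    rw [Set.uIcc_of_le (by linarith : t ≤ t + a)] at hs
    obtain ⟨h1, h2⟩ := hs
    show (mu3 * max 0 (min s a - max (s - t) 0)) ^ 2 = mu3 ^ 2 * (a + t - s) ^ 2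
    have hm : min s a = a := min_eq_right (by linarith)
    have hx : max (s - t) 0 = s - t := max_eq_left (by linarith)
    have hy : max 0 (a - (s - t)) = a - (s - t) := max_eq_right (by linarith)
    rw [hm, hx, hy]
    ring
  have e3' : ∫ s in t..(t + a), mu3 ^ 2 * (a + t - s) ^ 2 = mu3 ^ 2 * a ^ 3 / 3 := by
    have := intervalIntegral.integral_comp_sub_left (a := t) (b := t + a)
      (fun x => mu3 ^ 2 * x ^ 2) (a + t)
    rw [this, sq_integral]
    ring
  rw [e1, e2, e3, e3', sq_integral, intervalIntegral.integral_const]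
  simp only [smul_eq_mul, mul_one]
  rw [ha]
  field_simp
  ring

private lemma inner_le (mu3 t : ℝ) (hmu3 : 0 < mu3) (ht0 : 0 ≤ t) (ht : t ≤ 1 / mu3) :
    ∫ s in Set.Ioi (0 : ℝ), (mu3 * max 0 (min s (1 / mu3) - max (s - t) 0)) ^ 2
      = mu3 * t ^ 2 - mu3 ^ 2 * t ^ 3 / 3 := by
  set a := 1 / mu3 with ha
  have ha0 : 0 < a := by positivity
  have key := inner_split mu3 t hmu3 ht0
  rw [key]
  have i1 := (cont_f mu3 t).intervalIntegrable (μ := volume) (0:ℝ) t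
  have i2 := (cont_f mu3 t).intervalIntegrable (μ := volume) t a
  have i3 := (cont_f mu3 t).intervalIntegrable (μ := volume) a (t + a)
  rw [← intervalIntegral.integral_add_adjacent_intervals (i1.trans i2) i3,
      ← intervalIntegral.integral_add_adjacent_intervals i1 i2]
  have e1 : ∫ s in (0:ℝ)..t, (mu3 * max 0 (min s a - max (s - t) 0)) ^ 2
      = ∫ s in (0:ℝ)..t, mu3 ^ 2 * s ^ 2 := by
    apply intervalIntegral.integral_congr
    intro s hs
    rw [Set.uIcc_of_le ht0] at hs
    obtain ⟨h1, h2⟩ := hs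
    show (mu3 * max 0 (min s a - max (s - t) 0)) ^ 2 = mu3 ^ 2 * s ^ 2
    have hm : min s a = s := min_eq_left (by linarith)
    have hx : max (s - t) 0 = 0 := max_eq_right (by linarith)
    rw [hm, hx, sub_zero, max_eq_right h1]
    ring
  have e2 : ∫ s in t..a, (mu3 * max 0 (min s a - max (s - t) 0)) ^ 2
      = ∫ s in t..a, (mu3 ^ 2 * t ^ 2 : ℝ) := by
    apply intervalIntegral.integral_congr
    intro s hs
    rw [Set.uIcc_of_le ht] at hs
    obtain ⟨h1, h2⟩ := hs
    show (mu3 * max 0 (min s a - max (s - t) 0)) ^ 2 = mu3 ^ 2 * t ^ 2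
    have hm : min s a = s := min_eq_left h2
    have hx : max (s - t) 0 = s - t := max_eq_left (by linarith)
    have hy : max 0 (s - (s - t)) = t := by rw [max_eq_right (by linarith)]; ring
    rw [hm, hx, hy]
    ring
  have e3 : ∫ s in a..(t + a), (mu3 * max 0 (min s a - max (s - t) 0)) ^ 2
      = ∫ s in a..(t + a), mu3 ^ 2 * (a + t - s) ^ 2 := by
    apply intervalIntegral.integral_congr
    intro s hs
    rw [Set.uIcc_of_le (by linarith : a ≤ t + a)] at hs
    obtain ⟨h1, h2⟩ := hs
    show (mu3 * max 0 (min s a - max (s - t) 0)) ^ 2 = mu3 ^ 2 * (a + t - s) ^ 2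
    have hm : min s a = a := min_eq_right h1
    have hx : max (s - t) 0 = s - t := max_eq_left (by linarith)
    have hy : max 0 (a - (s - t)) = a - (s - t) := max_eq_right (by linarith)
    rw [hm, hx, hy]
    ring
  have e3' : ∫ s in a..(t + a), mu3 ^ 2 * (a + t - s) ^ 2 = mu3 ^ 2 * t ^ 3 / 3 := by
    have := intervalIntegral.integral_comp_sub_left (a := a) (b := t + a)
      (fun x => mu3 ^ 2 * x ^ 2) (a + t)
    rw [this, sq_integral]
    ring
  rw [e1, e2, e3, e3', sq_integral, intervalIntegral.integral_const]
  simp only [smul_eq_mul]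
  rw [ha]
  field_simp
  ring

private lemma exp_deriv' (mu2 x : ℝ) :
    HasDerivAt (fun t : ℝ => Real.exp (-(mu2 * t))) (-mu2 * Real.exp (-(mu2 * x))) x := by
  have h : HasDerivAt (fun t : ℝ => -(mu2 * t)) (-mu2) x := by
    exact ((hasDerivAt_id x).const_mul mu2).neg.congr_deriv (by ring)
  simpa [mul_comm] using h.exp

private lemma tail_deriv (mu2 a x : ℝ) (hmu2 : 0 < mu2) :
    HasDerivAt (fun t : ℝ => -(t - a / 3 + 1 / mu2) * Real.exp (-(mu2 * t)))
      ((x - a / 3) * (mu2 * Real.exp (-(mu2 * x)))) x := by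
  have h1 : HasDerivAt (fun t : ℝ => -(t - a / 3 + 1 / mu2)) (-1) x := by
    exact (((hasDerivAt_id x).sub_const (a / 3)).add_const (1 / mu2)).neg.congr_deriv (by ring)
  have := h1.mul (exp_deriv' mu2 x)
  refine this.congr_deriv ?_
  have hm2 : mu2 ≠ 0 := hmu2.ne'
  field_simp
  ring

private lemma tail_tendsto (mu2 a : ℝ) (hmu2 : 0 < mu2) :
    Tendsto (fun t : ℝ => -(t - a / 3 + 1 / mu2) * Real.exp (-(mu2 * t))) atTop (𝓝 0) := by
  have hmul : Tendsto (fun t : ℝ => mu2 * t) atTop atTop :=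
    Filter.tendsto_id.const_mul_atTop hmu2
  have h1 : Tendsto (fun t : ℝ => (mu2 * t) * Real.exp (-(mu2 * t))) atTop (𝓝 0) := by
    have := (Real.tendsto_pow_mul_exp_neg_atTop_nhds_zero 1).comp hmul
    simpa [Function.comp_def] using this
  have h2 : Tendsto (fun t : ℝ => Real.exp (-(mu2 * t))) atTop (𝓝 0) := by
    have := Real.tendsto_exp_atBot.comp (tendsto_neg_atTop_atBot.comp hmul)
    simpa [Function.comp_def] using this
  have key : Tendsto (fun t : ℝ => -((mu2 * t) * Real.exp (-(mu2 * t))) / mu2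
      + (a / 3 - 1 / mu2) * Real.exp (-(mu2 * t))) atTop (𝓝 0) := by
    have := (h1.neg.div_const mu2).add (h2.const_mul (a / 3 - 1 / mu2))
    simpa using this
  refine key.congr (fun t => ?_)
  field_simp
  ring

private lemma tail_integrable (mu2 a : ℝ) (hmu2 : 0 < mu2) (ha : 0 < a) :
    IntegrableOn (fun t : ℝ => (t - a / 3) * (mu2 * Real.exp (-(mu2 * t)))) (Set.Ioi a) := by
  apply integrableOn_Ioi_deriv_of_nonneg
    (g := fun t : ℝ => -(t - a / 3 + 1 / mu2) * Real.exp (-(mu2 * t)))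
  · exact ((tail_deriv mu2 a a hmu2).continuousAt).continuousWithinAt
  · exact fun x _ => tail_deriv mu2 a x hmu2
  · intro x hx
    simp only [Set.mem_Ioi] at hx
    have : 0 ≤ x - a / 3 := by linarith
    positivity
  · exact tail_tendsto mu2 a hmu2

private lemma tail_integral (mu2 a : ℝ) (hmu2 : 0 < mu2) (ha : 0 < a) :
    ∫ t in Set.Ioi a, (t - a / 3) * (mu2 * Real.exp (-(mu2 * t)))
      = (2 * a / 3 + 1 / mu2) * Real.exp (-(mu2 * a)) := by
  rw [integral_Ioi_of_hasDerivAt_of_nonneg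
    ((tail_deriv mu2 a a hmu2).continuousAt).continuousWithinAt
    (fun x _ => tail_deriv mu2 a x hmu2)
    (fun x hx => by
      simp only [Set.mem_Ioi] at hx
      have : 0 ≤ x - a / 3 := by linarith
      positivity)
    (tail_tendsto mu2 a hmu2)]
  ring

private lemma poly_exp_deriv (mu2 mu3 x : ℝ) (hmu2 : 0 < mu2) :
    HasDerivAt (fun t : ℝ =>
        (mu3 ^ 2 / 3 * t ^ 3 + (mu3 ^ 2 / mu2 - mu3) * t ^ 2
          + (2 * mu3 ^ 2 / mu2 ^ 2 - 2 * mu3 / mu2) * t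
          + (2 * mu3 ^ 2 / mu2 ^ 3 - 2 * mu3 / mu2 ^ 2)) * Real.exp (-(mu2 * t)))
      ((mu3 * x ^ 2 - mu3 ^ 2 * x ^ 3 / 3) * (mu2 * Real.exp (-(mu2 * x)))) x := by
  have hp : HasDerivAt (fun t : ℝ =>
      mu3 ^ 2 / 3 * t ^ 3 + (mu3 ^ 2 / mu2 - mu3) * t ^ 2
        + (2 * mu3 ^ 2 / mu2 ^ 2 - 2 * mu3 / mu2) * t
        + (2 * mu3 ^ 2 / mu2 ^ 3 - 2 * mu3 / mu2 ^ 2))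
      (mu3 ^ 2 / 3 * (3 * x ^ 2) + (mu3 ^ 2 / mu2 - mu3) * (2 * x)
        + (2 * mu3 ^ 2 / mu2 ^ 2 - 2 * mu3 / mu2)) x := by
    have h3 : HasDerivAt (fun t : ℝ => t ^ 3) (3 * x ^ 2) x := by
      simpa using hasDerivAt_pow 3 x
    have h2 : HasDerivAt (fun t : ℝ => t ^ 2) (2 * x) x := by
      simpa using hasDerivAt_pow 2 x
    exact (((h3.const_mul _).add (h2.const_mul _)).add
      ((hasDerivAt_id x).const_mul _)).add_const _ |>.congr_deriv (by ring)
  have := hp.mul (exp_deriv' mu2 x)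
  refine this.congr_deriv ?_
  have hm2 : mu2 ≠ 0 := hmu2.ne'
  field_simp
  ring

/-- Second term of the protein variance when the mRNA lifetime is exponential (parameter `μ₂`)
and the protein lifetime is deterministic equal to `1/μ₃`. -/
theorem second_term_deterministic_protein (mu2 mu3 : ℝ) (hmu2 : 0 < mu2) (hmu3 : 0 < mu3) :
    ∫ t in Set.Ioi (0 : ℝ),
        (∫ s in Set.Ioi (0 : ℝ),
          (mu3 * max 0 (min s (1 / mu3) - max (s - t) 0)) ^ 2)
          * (mu2 * Real.exp (-(mu2 * t)))
      = 2 * mu3 / mu2 ^ 2 * (1 - mu3 / mu2 * (1 - Real.exp (-(mu2 / mu3)))) := by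
  have ha0 : (0:ℝ) < 1 / mu3 := by positivity
  have hU : Ioc (0:ℝ) (1 / mu3) ∪ Ioi (1 / mu3) = Ioi 0 := Set.Ioc_union_Ioi_eq_Ioi ha0.le
  -- equalities on the two pieces
  have hEqIoc : ∀ t ∈ Ioc (0:ℝ) (1 / mu3),
      (∫ s in Set.Ioi (0 : ℝ), (mu3 * max 0 (min s (1 / mu3) - max (s - t) 0)) ^ 2)
          * (mu2 * Real.exp (-(mu2 * t)))
        = (mu3 * t ^ 2 - mu3 ^ 2 * t ^ 3 / 3) * (mu2 * Real.exp (-(mu2 * t))) := by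
    intro t ht
    rw [inner_le mu3 t hmu3 ht.1.le ht.2]
  have hEqIoi : ∀ t ∈ Ioi (1 / mu3),
      (∫ s in Set.Ioi (0 : ℝ), (mu3 * max 0 (min s (1 / mu3) - max (s - t) 0)) ^ 2)
          * (mu2 * Real.exp (-(mu2 * t)))
        = (t - (1 / mu3) / 3) * (mu2 * Real.exp (-(mu2 * t))) := by
    intro t ht
    rw [inner_ge mu3 t hmu3 (le_of_lt ht)]
    congr 1
    ring
  -- integrability on the two pieces
  have hcont : Continuous (fun t : ℝ =>
      (mu3 * t ^ 2 - mu3 ^ 2 * t ^ 3 / 3) * (mu2 * Real.exp (-(mu2 * t)))) := by fun_prop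
  have hint1 : IntegrableOn (fun t : ℝ =>
      (∫ s in Set.Ioi (0 : ℝ), (mu3 * max 0 (min s (1 / mu3) - max (s - t) 0)) ^ 2)
        * (mu2 * Real.exp (-(mu2 * t)))) (Ioc 0 (1 / mu3)) :=
    IntegrableOn.congr_fun hcont.integrableOn_Ioc
      (fun t ht => (hEqIoc t ht).symm) measurableSet_Ioc
  have hint2 : IntegrableOn (fun t : ℝ =>
      (∫ s in Set.Ioi (0 : ℝ), (mu3 * max 0 (min s (1 / mu3) - max (s - t) 0)) ^ 2)
        * (mu2 * Real.exp (-(mu2 * t)))) (Ioi (1 / mu3)) :=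
    IntegrableOn.congr_fun (tail_integrable mu2 (1 / mu3) hmu2 ha0)
      (fun t ht => (hEqIoi t ht).symm) measurableSet_Ioi
  have hsplit := setIntegral_union (Set.Ioc_disjoint_Ioi le_rfl) measurableSet_Ioi hint1 hint2
  rw [hU] at hsplit
  rw [hsplit,
      setIntegral_congr_fun measurableSet_Ioc hEqIoc,
      setIntegral_congr_fun measurableSet_Ioi hEqIoi,
      tail_integral mu2 (1 / mu3) hmu2 ha0]
  have hIoc : ∫ t in Ioc (0:ℝ) (1 / mu3),
      (mu3 * t ^ 2 - mu3 ^ 2 * t ^ 3 / 3) * (mu2 * Real.exp (-(mu2 * t)))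
      = (mu3 ^ 2 / 3 * (1/mu3) ^ 3 + (mu3 ^ 2 / mu2 - mu3) * (1/mu3) ^ 2
          + (2 * mu3 ^ 2 / mu2 ^ 2 - 2 * mu3 / mu2) * (1/mu3)
          + (2 * mu3 ^ 2 / mu2 ^ 3 - 2 * mu3 / mu2 ^ 2)) * Real.exp (-(mu2 * (1/mu3)))
        - (2 * mu3 ^ 2 / mu2 ^ 3 - 2 * mu3 / mu2 ^ 2) := by
    rw [← intervalIntegral.integral_of_le ha0.le,
      intervalIntegral.integral_eq_sub_of_hasDerivAt
        (fun x _ => poly_exp_deriv mu2 mu3 x hmu2)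
        (hcont.intervalIntegrable (μ := volume) 0 (1 / mu3))]
    norm_num
  rw [hIoc]
  have hexp : mu2 * (1 / mu3) = mu2 / mu3 := by ring
  rw [hexp]
  have hm2 : mu2 ≠ 0 := ne_of_gt hmu2
  have hm3 : mu3 ≠ 0 := ne_of_gt hmu3
  field_simp
  ring
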